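/- For every real θ > 0, every integer k ≥ 1 and every real r > −θ: ∑_{n=k}^{∞} c(n−1,k−1) · θ^k / (θ)_n · Γ(n+θ)/Γ(n+θ+r) = θ^{k−1} · Γ(θ+1) / ( (θ+r)^k · Γ(θ+r) ). Equivalently, writing (x)_r = Γ(x+r)/Γ(x) for real x > 0 with x+r > 0: ∑_{n=k}^{∞} c(n−1,k−1) θ^k/(θ)_n · 1/((n+θ)_r) = θ^{k−1}/((θ+r)^k (θ+1)_{r−1}). -/

import Mathlib

noncomputable section

/-- The unsigned Stirling number of the first kind `c(m,j)`: the coefficient of `x^j` in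
`x(x+1)⋯(x+m−1)`. -/
def stirlingFirst (m j : ℕ) : ℕ := (ascPochhammer ℕ m).coeff j

/-- The summand: `c(n−1,k−1) · θ^k/(θ)_n · (n+θ)_r⁻¹`, with `(x)_r = Γ(x+r)/Γ(x)`. -/
def stirlingTerm (θ r : ℝ) (k n : ℕ) : ℝ :=
  (stirlingFirst (n - 1) (k - 1) : ℝ) * θ ^ k / (ascPochhammer ℝ n).eval θ
    * (Real.Gamma ((n : ℝ) + θ) / Real.Gamma ((n : ℝ) + θ + r))

open Finset Filter Polynomial

namespace Stmt16Aux

/-- Real-valued Stirling coefficient. -/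
def cR (N j : ℕ) : ℝ := (ascPochhammer ℝ N).coeff j

lemma cR_eq (N j : ℕ) : cR N j = (stirlingFirst N j : ℝ) := by
  rw [cR, stirlingFirst, ← ascPochhammer_map (algebraMap ℕ ℝ) N, Polynomial.coeff_map]
  simp

lemma cR_nonneg (N j : ℕ) : 0 ≤ cR N j := by
  rw [cR_eq]; positivity

lemma cR_rec (N j : ℕ) : cR (N+1) (j+1) = N * cR N (j+1) + cR N j := by
  unfold cR
  rw [ascPochhammer_succ_right, ← Polynomial.C_eq_natCast, mul_add, Polynomial.coeff_add,
    Polynomial.coeff_mul_X, Polynomial.coeff_mul_C]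
  ring

lemma cR_zero (N : ℕ) : cR (N+1) 0 = 0 := by
  rw [cR, Polynomial.coeff_zero_eq_eval_zero]
  simp

lemma cR_zero' (N : ℕ) : cR (N+1) 0 = N * cR N 0 := by
  cases N with
  | zero => simp [cR_zero]
  | succ M => rw [cR_zero, cR_zero]; ring

/-- Truncated evaluation. -/
def U (s : ℝ) (k N : ℕ) : ℝ := ∑ j ∈ Finset.range k, cR N j * s ^ j

lemma U_nonneg (s : ℝ) (hs : 0 ≤ s) (k N : ℕ) : 0 ≤ U s k N := by
  apply Finset.sum_nonneg
  intro j _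
  have := cR_nonneg N j
  positivity

lemma eval_eq_sum (s : ℝ) (k N : ℕ) (h : N < k) :
    (ascPochhammer ℝ N).eval s = U s k N := by
  have hdeg : (ascPochhammer ℝ N).natDegree = N := ascPochhammer_natDegree ℝ N
  rw [Polynomial.eval_eq_sum_range' (by rw [hdeg]; exact h)]
  rfl

lemma U_le_eval (s : ℝ) (hs : 0 ≤ s) (k N : ℕ) :
    U s k N ≤ (ascPochhammer ℝ N).eval s := by
  have hbig : (ascPochhammer ℝ N).eval s = U s (max k (N+1)) N :=
    eval_eq_sum s _ N (lt_of_lt_of_le (Nat.lt_succ_self N) (le_max_right _ _))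
  rw [hbig]
  apply Finset.sum_le_sum_of_subset_of_nonneg
  · exact Finset.range_subset_range.2 (le_max_left _ _)
  · intro j _ _
    have := cR_nonneg N j
    positivity

lemma U_succ (s : ℝ) (K N : ℕ) :
    U s (K+1) (N+1) = (s + N) * U s (K+1) N - cR N K * s ^ (K+1) := by
  have h1 : U s (K+1) (N+1)
      = ∑ j ∈ Finset.range K, cR (N+1) (j+1) * s ^ (j+1) + cR (N+1) 0 * s ^ 0 :=
    Finset.sum_range_succ' _ K
  have h2 : U s (K+1) N
      = ∑ j ∈ Finset.range K, cR N (j+1) * s ^ (j+1) + cR N 0 * s ^ 0 :=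
    Finset.sum_range_succ' _ K
  have h3 : U s (K+1) N
      = ∑ j ∈ Finset.range K, cR N j * s ^ j + cR N K * s ^ K :=
    Finset.sum_range_succ _ K
  have hsum : ∑ j ∈ Finset.range K, cR (N+1) (j+1) * s ^ (j+1)
      = (N : ℝ) * (∑ j ∈ Finset.range K, cR N (j+1) * s ^ (j+1))
        + s * ∑ j ∈ Finset.range K, cR N j * s ^ j := by
    rw [Finset.mul_sum, Finset.mul_sum, ← Finset.sum_add_distrib]
    apply Finset.sum_congr rfl
    intro j _
    rw [cR_rec]
    ring
  rw [h1, hsum, cR_zero']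
  have e2 : ∑ j ∈ Finset.range K, cR N (j+1) * s ^ (j+1)
      = U s (K+1) N - cR N 0 * s ^ 0 := by rw [h2]; ring
  have e3 : ∑ j ∈ Finset.range K, cR N j * s ^ j
      = U s (K+1) N - cR N K * s ^ K := by rw [h3]; ring
  rw [e2, e3]
  ring

/-- the ratio of truncated to full pochhammer, telescoping identity. -/
lemma partial_sum (s : ℝ) (hs : 0 < s) (K : ℕ) (M : ℕ) :
    ∑ m ∈ Finset.range M, cR (m+K) K * s ^ (K+1) / (ascPochhammer ℝ (m+K+1)).eval s
      = 1 - U s (K+1) (M+K) / (ascPochhammer ℝ (M+K)).eval s := by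
  induction M with
  | zero =>
    have h := eval_eq_sum s (K+1) K (Nat.lt_succ_self K)
    have hpos : (0:ℝ) < (ascPochhammer ℝ K).eval s := ascPochhammer_pos K s hs
    simp [h.symm, div_self (ne_of_gt hpos)]
  | succ M ih =>
    rw [Finset.sum_range_succ, ih, show M+1+K = M+K+1 from by omega]
    have hP : (0:ℝ) < (ascPochhammer ℝ (M+K)).eval s := ascPochhammer_pos _ s hs
    have hP1 : (0:ℝ) < (ascPochhammer ℝ (M+K+1)).eval s := ascPochhammer_pos _ s hs
    have hrec : (ascPochhammer ℝ (M+K+1)).eval s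
        = (ascPochhammer ℝ (M+K)).eval s * (s + (M+K : ℕ)) := ascPochhammer_succ_eval _ s
    have hU : U s (K+1) (M+K+1) = (s + (M+K : ℕ)) * U s (K+1) (M+K) - cR (M+K) K * s ^ (K+1) :=
      U_succ s K (M+K)
    rw [hU, hrec]
    have hsn : (0:ℝ) < s + (M+K : ℕ) := by positivity
    field_simp
    ring

/-- comparison with half-parameter pochhammer. -/
lemma U_le_half (s : ℝ) (hs : 0 < s) (K N : ℕ) :
    U s (K+1) N ≤ 2 ^ K * (ascPochhammer ℝ N).eval (s/2) := by
  have h1 : U s (K+1) N ≤ 2 ^ K * U (s/2) (K+1) N := by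
    rw [U, U, Finset.mul_sum]
    apply Finset.sum_le_sum
    intro j hj
    have hj' : j ≤ K := Nat.lt_succ_iff.mp (Finset.mem_range.mp hj)
    have hc := cR_nonneg N j
    have hsj : s ^ j = 2 ^ j * (s/2) ^ j := by
      rw [← mul_pow]; ring_nf
    rw [hsj]
    have h2j : (2:ℝ) ^ j ≤ 2 ^ K := pow_le_pow_right₀ (by norm_num) hj'
    have hsp : (0:ℝ) ≤ (s/2) ^ j := by positivity
    calc cR N j * (2 ^ j * (s/2) ^ j) = 2 ^ j * (cR N j * (s/2) ^ j) := by ring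
      _ ≤ 2 ^ K * (cR N j * (s/2) ^ j) := by
          apply mul_le_mul_of_nonneg_right h2j (by positivity)
      _ = 2 ^ K * (cR N j * (s/2) ^ j) := rfl
  calc U s (K+1) N ≤ 2 ^ K * U (s/2) (K+1) N := h1
    _ ≤ 2 ^ K * (ascPochhammer ℝ N).eval (s/2) := by
        apply mul_le_mul_of_nonneg_left (U_le_eval (s/2) (by positivity) (K+1) N) (by positivity)

/-- exponential bound on the ratio. -/
lemma half_ratio (s : ℝ) (hs : 0 < s) (N : ℕ) :
    (ascPochhammer ℝ N).eval (s/2)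
      ≤ (ascPochhammer ℝ N).eval s
        * Real.exp (-(s/2) * ∑ i ∈ Finset.range N, 1/(s + i)) := by
  induction N with
  | zero => simp
  | succ N ih =>
    rw [ascPochhammer_succ_eval, ascPochhammer_succ_eval, Finset.sum_range_succ]
    have hsn : (0:ℝ) < s + N := by positivity
    have hsplit : Real.exp (-(s/2) * (∑ i ∈ Finset.range N, 1/(s + i) + 1/(s + N)))
        = Real.exp (-(s/2) * ∑ i ∈ Finset.range N, 1/(s + i))
          * Real.exp (-(s/2) * (1/(s+N))) := by
      rw [← Real.exp_add]; congr 1; ring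
    rw [hsplit]
    have key : s/2 + N ≤ (s + N) * Real.exp (-(s/2) * (1/(s+N))) := by
      have h1 : (-(s/2) * (1/(s+N))) + 1 ≤ Real.exp (-(s/2) * (1/(s+N))) :=
        Real.add_one_le_exp _
      have h2 : (s + N) * ((-(s/2) * (1/(s+N))) + 1) = s/2 + N := by
        field_simp; ring
      calc s/2 + N = (s + N) * ((-(s/2) * (1/(s+N))) + 1) := h2.symm
        _ ≤ (s + N) * Real.exp (-(s/2) * (1/(s+N))) :=
            mul_le_mul_of_nonneg_left h1 (le_of_lt hsn)
    have hhalfpos : (0:ℝ) ≤ (ascPochhammer ℝ N).eval (s/2) :=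
      le_of_lt (ascPochhammer_pos N (s/2) (by positivity))
    have hEpos : (0:ℝ) < Real.exp (-(s/2) * ∑ i ∈ Finset.range N, 1/(s + i)) := Real.exp_pos _
    have hhalfN : (0:ℝ) < s/2 + N := by positivity
    calc (ascPochhammer ℝ N).eval (s/2) * (s/2 + N)
        ≤ ((ascPochhammer ℝ N).eval s * Real.exp (-(s/2) * ∑ i ∈ Finset.range N, 1/(s + i)))
            * (s/2 + N) := mul_le_mul_of_nonneg_right ih (le_of_lt hhalfN)
      _ ≤ ((ascPochhammer ℝ N).eval s * Real.exp (-(s/2) * ∑ i ∈ Finset.range N, 1/(s + i)))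
            * ((s + N) * Real.exp (-(s/2) * (1/(s+N)))) := by
          apply mul_le_mul_of_nonneg_left key
          have := ascPochhammer_pos N s hs
          positivity
      _ = (ascPochhammer ℝ N).eval s * (s + N)
            * (Real.exp (-(s/2) * ∑ i ∈ Finset.range N, 1/(s + i))
              * Real.exp (-(s/2) * (1/(s+N)))) := by ring

lemma sum_inv_tendsto (s : ℝ) (hs : 0 < s) :
    Tendsto (fun N => ∑ i ∈ Finset.range N, 1/(s + i)) atTop atTop := by
  have hcomp : ∀ N, (1/(s+1)) * (∑ i ∈ Finset.range N, 1/((i:ℝ)+1))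
      ≤ ∑ i ∈ Finset.range N, 1/(s + i) := by
    intro N
    rw [Finset.mul_sum]
    apply Finset.sum_le_sum
    intro i _
    rw [div_mul_div_comm, one_mul]
    apply div_le_div_of_nonneg_left (by norm_num) (by positivity)
    have : (0:ℝ) ≤ s * i := by positivity
    nlinarith
  have hbase : Tendsto (fun N => (1/(s+1)) * (∑ i ∈ Finset.range N, 1/((i:ℝ)+1))) atTop atTop := by
    apply Tendsto.const_mul_atTop (by positivity)
    exact Real.tendsto_sum_range_one_div_nat_succ_atTop
  exact tendsto_atTop_mono hcomp hbase

/-- The main limit: tail of the truncated distribution tends to 0. -/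
lemma tail_tendsto (s : ℝ) (hs : 0 < s) (K : ℕ) :
    Tendsto (fun N => U s (K+1) N / (ascPochhammer ℝ N).eval s) atTop (nhds 0) := by
  have hbound : ∀ N, U s (K+1) N / (ascPochhammer ℝ N).eval s
      ≤ 2 ^ K * Real.exp (-(s/2) * ∑ i ∈ Finset.range N, 1/(s + i)) := by
    intro N
    have hP : (0:ℝ) < (ascPochhammer ℝ N).eval s := ascPochhammer_pos N s hs
    rw [div_le_iff₀ hP]
    calc U s (K+1) N ≤ 2 ^ K * (ascPochhammer ℝ N).eval (s/2) := U_le_half s hs K N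
      _ ≤ 2 ^ K * ((ascPochhammer ℝ N).eval s
            * Real.exp (-(s/2) * ∑ i ∈ Finset.range N, 1/(s + i))) :=
          mul_le_mul_of_nonneg_left (half_ratio s hs N) (by positivity)
      _ = 2 ^ K * Real.exp (-(s/2) * ∑ i ∈ Finset.range N, 1/(s + i))
            * (ascPochhammer ℝ N).eval s := by ring
  have hnonneg : ∀ N, 0 ≤ U s (K+1) N / (ascPochhammer ℝ N).eval s := by
    intro N
    have hP : (0:ℝ) < (ascPochhammer ℝ N).eval s := ascPochhammer_pos N s hs
    exact div_nonneg (U_nonneg s (le_of_lt hs) _ N) (le_of_lt hP)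
  have hexp : Tendsto (fun N => 2 ^ K * Real.exp (-(s/2) * ∑ i ∈ Finset.range N, 1/(s + i)))
      atTop (nhds 0) := by
    have h1 : Tendsto (fun N => (s/2) * ∑ i ∈ Finset.range N, 1/(s + i)) atTop atTop :=
      Tendsto.const_mul_atTop (by positivity) (sum_inv_tendsto s hs)
    have h2 : Tendsto (fun N => -(s/2) * ∑ i ∈ Finset.range N, 1/(s + i)) atTop atBot :=
      Tendsto.const_mul_atTop_of_neg (by linarith : -(s/2) < 0) (sum_inv_tendsto s hs)
    have h3 : Tendsto (fun N => Real.exp (-(s/2) * ∑ i ∈ Finset.range N, 1/(s + i)))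
        atTop (nhds 0) := Real.tendsto_exp_atBot.comp h2
    simpa using h3.const_mul (2 ^ K : ℝ)
  have := squeeze_zero hnonneg hbound hexp
  exact this

end Stmt16Aux

open Stmt16Aux

lemma gamma_ascPochhammer (x : ℝ) (hx : 0 < x) (n : ℕ) :
    Real.Gamma (x + n) = Real.Gamma x * (ascPochhammer ℝ n).eval x := by
  induction n with
  | zero => simp
  | succ n ih =>
    have h : x + (n+1 : ℕ) = (x + n) + 1 := by push_cast; ring
    rw [h, Real.Gamma_add_one (by positivity), ih, ascPochhammer_succ_eval]
    ring

theorem stmt_16 (θ : ℝ) (hθ : 0 < θ) (k : ℕ) (hk : 1 ≤ k) (r : ℝ) (hr : -θ < r) :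
    Summable (fun m : ℕ => stirlingTerm θ r k (m + k))
      ∧ ∑' m : ℕ, stirlingTerm θ r k (m + k)
        = θ ^ (k - 1) * Real.Gamma (θ + 1) / ((θ + r) ^ k * Real.Gamma (θ + r)) := by
  obtain ⟨K, rfl⟩ : ∃ K, k = K + 1 := ⟨k - 1, (Nat.succ_pred_eq_of_pos hk).symm⟩
  set s : ℝ := θ + r with hs_def
  have hs : 0 < s := by rw [hs_def]; linarith
  -- the normalized summand
  set a : ℕ → ℝ := fun m => cR (m+K) K * s ^ (K+1) / (ascPochhammer ℝ (m+K+1)).eval s with ha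
  have ha_nonneg : ∀ m, 0 ≤ a m := by
    intro m
    have hP : (0:ℝ) < (ascPochhammer ℝ (m+K+1)).eval s := ascPochhammer_pos _ s hs
    have := cR_nonneg (m+K) K
    positivity
  -- partial sums tend to 1
  have htail : Tendsto (fun M => U s (K+1) (M+K) / (ascPochhammer ℝ (M+K)).eval s)
      atTop (nhds 0) := by
    have := (tail_tendsto s hs K).comp (tendsto_add_atTop_nat K)
    exact this
  have hpartial : Tendsto (fun M => ∑ m ∈ Finset.range M, a m) atTop (nhds 1) := by
    have heq : ∀ M, ∑ m ∈ Finset.range M, a m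
        = 1 - U s (K+1) (M+K) / (ascPochhammer ℝ (M+K)).eval s := fun M => partial_sum s hs K M
    simp only [heq]
    have := htail.const_sub (1:ℝ)
    simpa using this
  have hHasSum : HasSum a 1 := (hasSum_iff_tendsto_nat_of_nonneg ha_nonneg 1).mpr hpartial
  -- relate stirlingTerm to a
  have hC : ∀ m : ℕ, stirlingTerm θ r (K+1) (m + (K+1))
      = (θ ^ (K+1) * Real.Gamma θ / (Real.Gamma s * s ^ (K+1))) * a m := by
    intro m
    have hn : m + (K+1) = (m + K) + 1 := by ring
    have hPθ : (0:ℝ) < (ascPochhammer ℝ (m+K+1)).eval θ := ascPochhammer_pos _ θ hθ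
    have hPs : (0:ℝ) < (ascPochhammer ℝ (m+K+1)).eval s := ascPochhammer_pos _ s hs
    have hGθ : (0:ℝ) < Real.Gamma θ := Real.Gamma_pos_of_pos hθ
    have hGs : (0:ℝ) < Real.Gamma s := Real.Gamma_pos_of_pos hs
    have hg1 : Real.Gamma (((m + (K+1) : ℕ) : ℝ) + θ)
        = Real.Gamma θ * (ascPochhammer ℝ (m+K+1)).eval θ := by
      rw [add_comm ((m + (K+1) : ℕ) : ℝ) θ]
      rw [show m + (K+1) = m+K+1 from by ring]
      exact gamma_ascPochhammer θ hθ (m+K+1)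
    have hg2 : Real.Gamma (((m + (K+1) : ℕ) : ℝ) + θ + r)
        = Real.Gamma s * (ascPochhammer ℝ (m+K+1)).eval s := by
      have : ((m + (K+1) : ℕ) : ℝ) + θ + r = s + ((m+K+1 : ℕ) : ℝ) := by
        rw [hs_def]; push_cast; ring
      rw [this]
      exact gamma_ascPochhammer s hs (m+K+1)
    rw [stirlingTerm, hg1, hg2]
    have h1 : m + (K+1) - 1 = m + K := by omega
    have h2 : K + 1 - 1 = K := by omega
    rw [h1, h2, show m + (K+1) = m+K+1 from by ring, ha]
    rw [← cR_eq]
    field_simp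
  have hsum2 : HasSum (fun m : ℕ => stirlingTerm θ r (K+1) (m + (K+1)))
      ((θ ^ (K+1) * Real.Gamma θ / (Real.Gamma s * s ^ (K+1))) * 1) := by
    have := hHasSum.mul_left (θ ^ (K+1) * Real.Gamma θ / (Real.Gamma s * s ^ (K+1)))
    exact this.congr_fun fun m => hC m
  refine ⟨hsum2.summable, ?_⟩
  rw [hsum2.tsum_eq]
  have hGθ : Real.Gamma θ ≠ 0 := ne_of_gt (Real.Gamma_pos_of_pos hθ)
  have hGs : Real.Gamma s ≠ 0 := ne_of_gt (Real.Gamma_pos_of_pos hs)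
  rw [Real.Gamma_add_one (ne_of_gt hθ)]
  have h2 : K + 1 - 1 = K := by omega
  rw [h2, mul_one]
  ring
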